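/- Let $\lambda>\iota>0$, $\rho_0>\rho_\infty>0$, and $n\ge 2$. Suppose $\omega_1,\dots,\omega_{n-1}:[0,\infty)\to\mathbb{R}$ are $C^1$ functions forming a cascade of first-order filters: $\dot\omega_1+\lambda\omega_1=\bar z$ and $\dot\omega_{k}+\lambda\omega_{k}=\omega_{k-1}$ for $k=2,\dots,n-1$, where $|\bar z(t)|\le(\rho_0-\rho_\infty)e^{-\iota t}+\rho_\infty$ for all $t\ge0$. Then there exist constants $\bar\omega_k>0$ (defined recursively by $\bar\omega_1=|\omega_1(0)|+(\rho_0-\rho_\infty)/(\lambda-\iota)$ and $\bar\omega_k=|\omega_k(0)|+\bar\omega_{k-1}/(\lambda-\iota)$) such that $|\omega_k(t)|\le\bar\omega_k e^{-\iota t}+\rho_\infty/\lambda^k$ for all $t\ge0$ and $k=1,\dots,n-1$. -/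

import Mathlib

open Real Set

/-- Key comparison lemma for one first-order filter. -/
lemma filter_key {lam ι A Bc : ℝ} (hlam : lam > ι) (hι : ι > 0) (hA : 0 ≤ A) (hBc : 0 ≤ Bc)
    {f u : ℝ → ℝ} (hf : Continuous f)
    (hf' : ∀ t, 0 ≤ t → HasDerivAt f (u t - lam * f t) t)
    (hu : ∀ t, 0 ≤ t → |u t| ≤ A * Real.exp (-ι * t) + Bc) :
    ∀ t, 0 ≤ t → |f t| ≤ (|f 0| + A / (lam - ι)) * Real.exp (-ι * t) + Bc / lam := by
  have hd : 0 < lam - ι := sub_pos.2 hlam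
  have hlam0 : 0 < lam := hι.trans hlam
  intro T hT
  set v : ℝ → ℝ := fun t => Real.exp (lam * t) * f t with hv_def
  set Bd : ℝ → ℝ := fun t =>
    |f 0| + A / (lam - ι) * (Real.exp ((lam - ι) * t) - 1) + Bc / lam * (Real.exp (lam * t) - 1)
    with hBd_def
  have hv : ContinuousOn v (Icc 0 T) :=
    (((Real.continuous_exp.comp (continuous_const.mul continuous_id)).mul hf)).continuousOn
  have hv' : ∀ x ∈ Ico (0:ℝ) T, HasDerivWithinAt v (Real.exp (lam * x) * u x) (Ici x) x := by
    intro x hx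
    have he : HasDerivAt (fun t => Real.exp (lam * t)) (Real.exp (lam * x) * lam) x := by
      exact ((Real.hasDerivAt_exp (lam * x)).comp x ((hasDerivAt_id x).const_mul lam)).congr_deriv (by ring)
    have := he.mul (hf' x hx.1)
    have h2 : Real.exp (lam * x) * lam * f x + Real.exp (lam * x) * (u x - lam * f x)
        = Real.exp (lam * x) * u x := by ring
    exact (h2 ▸ this).hasDerivWithinAt
  have hBd' : ∀ x : ℝ, HasDerivAt Bd (A * Real.exp ((lam - ι) * x) + Bc * Real.exp (lam * x)) x := by
    intro x
    have h1 : HasDerivAt (fun t => Real.exp ((lam - ι) * t)) (Real.exp ((lam - ι) * x) * (lam - ι)) x := by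
      exact ((Real.hasDerivAt_exp ((lam - ι) * x)).comp x ((hasDerivAt_id x).const_mul (lam - ι))).congr_deriv (by ring)
    have h2 : HasDerivAt (fun t => Real.exp (lam * t)) (Real.exp (lam * x) * lam) x := by
      exact ((Real.hasDerivAt_exp (lam * x)).comp x ((hasDerivAt_id x).const_mul lam)).congr_deriv (by ring)
    have := ((((h1.sub_const 1).const_mul (A / (lam - ι))).const_add (|f 0|)).add
      ((h2.sub_const 1).const_mul (Bc / lam)))
    refine this.congr_deriv ?_
    linear_combination (Real.exp ((lam - ι) * x)) * (div_mul_cancel₀ A hd.ne') +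
      (Real.exp (lam * x)) * (div_mul_cancel₀ Bc hlam0.ne')
  have ha : ‖v 0‖ ≤ Bd 0 := by
    simp [hv_def, hBd_def, Real.norm_eq_abs]
  have bound : ∀ x ∈ Ico (0:ℝ) T,
      ‖Real.exp (lam * x) * u x‖ ≤ A * Real.exp ((lam - ι) * x) + Bc * Real.exp (lam * x) := by
    intro x hx
    rw [Real.norm_eq_abs, abs_mul, abs_of_pos (Real.exp_pos _)]
    calc Real.exp (lam * x) * |u x|
        ≤ Real.exp (lam * x) * (A * Real.exp (-ι * x) + Bc) :=
          mul_le_mul_of_nonneg_left (hu x hx.1) (Real.exp_pos _).le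
      _ = A * Real.exp ((lam - ι) * x) + Bc * Real.exp (lam * x) := by
          rw [mul_add, mul_comm (Real.exp (lam * x)) (A * Real.exp (-ι * x)), mul_assoc,
            ← Real.exp_add]
          ring_nf
  have hvT : ‖v T‖ ≤ Bd T :=
    image_norm_le_of_norm_deriv_right_le_deriv_boundary hv hv' ha hBd' bound
      (right_mem_Icc.2 hT)
  rw [Real.norm_eq_abs] at hvT
  have hfT : |f T| = Real.exp (-(lam * T)) * |v T| := by
    rw [hv_def]
    simp only [abs_mul, abs_of_pos (Real.exp_pos _), ← mul_assoc, ← Real.exp_add]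
    simp
  have key : |f T| ≤ Real.exp (-(lam * T)) * Bd T := by
    rw [hfT]
    exact mul_le_mul_of_nonneg_left hvT (Real.exp_pos _).le
  refine key.trans ?_
  have e1 : Real.exp (-(lam * T)) * Real.exp ((lam - ι) * T) = Real.exp (-ι * T) := by
    rw [← Real.exp_add]; ring_nf
  have e2 : Real.exp (-(lam * T)) * Real.exp (lam * T) = 1 := by
    rw [← Real.exp_add]; simp
  have hE1 : Real.exp (-(lam * T)) ≤ Real.exp (-ι * T) := by
    apply Real.exp_le_exp.2; nlinarith
  have hE0 : 0 < Real.exp (-(lam * T)) := Real.exp_pos _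
  have hAq : 0 ≤ A / (lam - ι) := div_nonneg hA hd.le
  have hBq : 0 ≤ Bc / lam := div_nonneg hBc hlam0.le
  have habs : 0 ≤ |f 0| := abs_nonneg _
  simp only [hBd_def]
  nlinarith [mul_le_mul_of_nonneg_left hE1 habs]

theorem filter_cascade_bound (lam ι ρ₀ ρinf : ℝ) (n : ℕ)
    (hlam : lam > ι) (hι : ι > 0) (hρ : ρ₀ > ρinf) (hρinf : ρinf > 0) (hn : 2 ≤ n)
    (zbar : ℝ → ℝ) (ω : ℕ → ℝ → ℝ)
    (hz : ∀ t : ℝ, 0 ≤ t → |zbar t| ≤ (ρ₀ - ρinf) * Real.exp (-ι * t) + ρinf)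
    (hC1 : ∀ k, 1 ≤ k → k ≤ n - 1 → Continuous (ω k))
    (hω1 : ∀ t : ℝ, 0 ≤ t → HasDerivAt (ω 1) (zbar t - lam * ω 1 t) t)
    (hωk : ∀ k, 2 ≤ k → k ≤ n - 1 →
      ∀ t : ℝ, 0 ≤ t → HasDerivAt (ω k) (ω (k - 1) t - lam * ω k t) t) :
    ∃ ωbar : ℕ → ℝ,
      ωbar 1 = |ω 1 0| + (ρ₀ - ρinf) / (lam - ι) ∧
      (∀ k, 2 ≤ k → k ≤ n - 1 → ωbar k = |ω k 0| + ωbar (k - 1) / (lam - ι)) ∧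
      (∀ k, 1 ≤ k → k ≤ n - 1 → 0 < ωbar k) ∧
      (∀ k, 1 ≤ k → k ≤ n - 1 → ∀ t : ℝ, 0 ≤ t →
        |ω k t| ≤ ωbar k * Real.exp (-ι * t) + ρinf / lam ^ k) := by
  have hd : 0 < lam - ι := sub_pos.2 hlam
  have hlam0 : 0 < lam := hι.trans hlam
  set W : ℕ → ℝ := fun k => Nat.rec (ρ₀ - ρinf) (fun m ih => |ω (m + 1) 0| + ih / (lam - ι)) k
    with hW_def
  have hWpos : ∀ k, 0 < W k := by
    intro k
    induction k with
    | zero => exact sub_pos.2 hρ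
    | succ m ih =>
      have : W (m + 1) = |ω (m + 1) 0| + W m / (lam - ι) := rfl
      rw [this]
      positivity
  refine ⟨W, rfl, ?_, fun k _ _ => hWpos k, ?_⟩
  · intro k hk _
    obtain ⟨m, rfl⟩ : ∃ m, k = m + 1 := ⟨k - 1, by omega⟩
    rfl
  · intro k hk hkn
    induction k with
    | zero => omega
    | succ m ih =>
      rcases Nat.eq_zero_or_pos m with hm | hm
      · subst hm
        have h1n : 1 ≤ n - 1 := by omega
        have := filter_key (f := ω 1) (u := zbar) hlam hι (by linarith) hρinf.le
          (hC1 1 le_rfl h1n) hω1 hz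
        intro t ht
        have hW1 : W 1 = |ω 1 0| + (ρ₀ - ρinf) / (lam - ι) := rfl
        simpa [hW1, pow_one] using this t ht
      · have hmn : m ≤ n - 1 := by omega
        have ihm := ih (by omega) hmn
        have hder : ∀ t, 0 ≤ t → HasDerivAt (ω (m + 1)) (ω m t - lam * ω (m + 1) t) t := by
          intro t ht
          simpa using hωk (m + 1) (by omega) hkn t ht
        have hB : (0:ℝ) ≤ ρinf / lam ^ m := by positivity
        have := filter_key (f := ω (m + 1)) (u := ω m) hlam hι (hWpos m).le hB
          (hC1 (m + 1) (by omega) hkn) hder ihm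
        intro t ht
        have hWs : W (m + 1) = |ω (m + 1) 0| + W m / (lam - ι) := rfl
        have hpow : ρinf / lam ^ m / lam = ρinf / lam ^ (m + 1) := by
          rw [div_div, ← pow_succ]
        calc |ω (m + 1) t| ≤ (|ω (m + 1) 0| + W m / (lam - ι)) * Real.exp (-ι * t)
            + (ρinf / lam ^ m) / lam := this t ht
          _ = W (m + 1) * Real.exp (-ι * t) + ρinf / lam ^ (m + 1) := by rw [hWs, hpow]
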